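/- If X is locally compact Hausdorff and second countable, and (Y,d) is a metric space, then the compact-open topology τ_co and the topology of compact convergence τ_cc coincide on the space of continuous partial functions from X to Y with open domain. -/

import Mathlib

open Set Topology Filter

/-- A continuous partial function from `X` to `Y` with open domain. -/
structure Cod (X Y : Type*) [TopologicalSpace X] [TopologicalSpace Y] where
  dom : Set X
  toFun : dom → Y
  isOpen_dom : IsOpen dom
  continuous_toFun : Continuous toFun

namespace Cod

variable {X Y : Type*} [TopologicalSpace X] [TopologicalSpace Y]

/-- The image of a subset of `X` under a partial function. -/
def image (f : Cod X Y) (K : Set X) : Set Y := f.toFun '' ((↑) ⁻¹' K)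

/-- The empty partial function. -/
def empty (X Y : Type*) [TopologicalSpace X] [TopologicalSpace Y] : Cod X Y where
  dom := ∅
  toFun := fun x => absurd x.2 (Set.notMem_empty _)
  isOpen_dom := isOpen_empty
  continuous_toFun := by
    rw [continuous_iff_continuousAt]
    rintro ⟨x, hx⟩
    exact absurd hx (Set.notMem_empty x)

end Cod

/-- The compact-open topology on `Cod X Y`, generated by the sets `⟨K,V⟩`. -/
def codCO (X Y : Type*) [TopologicalSpace X] [TopologicalSpace Y] : TopologicalSpace (Cod X Y) :=
  TopologicalSpace.generateFrom
    {S | ∃ (K : Set X) (V : Set Y), IsCompact K ∧ IsOpen V ∧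
      S = {f : Cod X Y | K ⊆ f.dom ∧ f.image K ⊆ V}}

/-- `dK f g K = sup_{x ∈ K} d (f x) (g x)` (meaningful when `K ⊆ dom f ∩ dom g`). -/
noncomputable def dK {X Y : Type*} [TopologicalSpace X] [MetricSpace Y]
    (f g : Cod X Y) (K : Set X) : ℝ :=
  sSup {r | ∃ (x : X) (hf : x ∈ f.dom) (hg : x ∈ g.dom), x ∈ K ∧
    r = dist (f.toFun ⟨x, hf⟩) (g.toFun ⟨x, hg⟩)}

/-- The basic set `B_K(f,ε)` of the topology of compact convergence. -/
def cball {X Y : Type*} [TopologicalSpace X] [MetricSpace Y]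
    (f : Cod X Y) (K : Set X) (ε : ℝ) : Set (Cod X Y) :=
  {g | K ⊆ g.dom ∧ dK f g K < ε}

/-- The topology of compact convergence on `Cod X Y`. -/
def tauCC (X Y : Type*) [TopologicalSpace X] [MetricSpace Y] : TopologicalSpace (Cod X Y) :=
  TopologicalSpace.generateFrom
    (insert Set.univ
      {S | ∃ (f : Cod X Y) (K : Set X) (ε : ℝ), K.Nonempty ∧ IsCompact K ∧ K ⊆ f.dom ∧
        0 < ε ∧ S = cball f K ε})

section Aux

variable {X Y : Type*} [TopologicalSpace X] [MetricSpace Y]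

/-- The set of distances appearing in `dK`. -/
def Dset (f g : Cod X Y) (K : Set X) : Set ℝ :=
  {r | ∃ (x : X) (hf : x ∈ f.dom) (hg : x ∈ g.dom), x ∈ K ∧
    r = dist (f.toFun ⟨x, hf⟩) (g.toFun ⟨x, hg⟩)}

lemma dK_def (f g : Cod X Y) (K : Set X) : dK f g K = sSup (Dset f g K) := rfl

lemma Dset_eq_image (f g : Cod X Y) (K : Set X) :
    Dset f g K = (fun x : (f.dom ∩ g.dom : Set X) =>
      dist (f.toFun ⟨x.1, x.2.1⟩) (g.toFun ⟨x.1, x.2.2⟩)) '' ((↑) ⁻¹' K) := by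
  ext r
  constructor
  · rintro ⟨x, hf, hg, hxK, rfl⟩
    exact ⟨⟨x, hf, hg⟩, hxK, rfl⟩
  · rintro ⟨⟨x, hf, hg⟩, hxK, rfl⟩
    exact ⟨x, hf, hg, hxK, rfl⟩

lemma bddAbove_Dset (f g : Cod X Y) {K : Set X} (hK : IsCompact K)
    (hf : K ⊆ f.dom) (hg : K ⊆ g.dom) : BddAbove (Dset f g K) := by
  rw [Dset_eq_image]
  have hco : IsCompact ((↑) ⁻¹' K : Set (f.dom ∩ g.dom : Set X)) := by
    refine (Topology.IsInducing.subtypeVal.isCompact_preimage_iff ?_).2 hK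
    rw [Subtype.range_coe]
    exact Set.subset_inter hf hg
  have hcont : Continuous (fun x : (f.dom ∩ g.dom : Set X) =>
      dist (f.toFun ⟨x.1, x.2.1⟩) (g.toFun ⟨x.1, x.2.2⟩)) := by
    exact Continuous.dist
      (f.continuous_toFun.comp (continuous_inclusion Set.inter_subset_left))
      (g.continuous_toFun.comp (continuous_inclusion Set.inter_subset_right))
  exact (hco.image hcont).bddAbove

lemma dist_le_dK {f g : Cod X Y} {K : Set X} (hK : IsCompact K)
    (hf : K ⊆ f.dom) (hg : K ⊆ g.dom) {x : X} (hx : x ∈ K) :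
    dist (f.toFun ⟨x, hf hx⟩) (g.toFun ⟨x, hg hx⟩) ≤ dK f g K :=
  le_csSup (bddAbove_Dset f g hK hf hg) ⟨x, hf hx, hg hx, hx, rfl⟩

lemma dK_le {f g : Cod X Y} {K : Set X} (hne : K.Nonempty)
    (hf : K ⊆ f.dom) (hg : K ⊆ g.dom) {c : ℝ}
    (h : ∀ x (hx : x ∈ K), dist (f.toFun ⟨x, hf hx⟩) (g.toFun ⟨x, hg hx⟩) ≤ c) :
    dK f g K ≤ c := by
  apply csSup_le
  · obtain ⟨x, hx⟩ := hne
    exact ⟨_, ⟨x, hf hx, hg hx, hx, rfl⟩⟩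
  · rintro r ⟨x, hfx, hgx, hx, rfl⟩
    exact h x hx

lemma dK_self {f : Cod X Y} {K : Set X} (hne : K.Nonempty) (hf : K ⊆ f.dom) :
    dK f f K = 0 := by
  have h : Dset f f K = {0} := by
    apply Set.Subset.antisymm
    · rintro r ⟨x, hfx, _, hx, rfl⟩
      simp
    · rintro r (rfl : r = 0)
      obtain ⟨x, hx⟩ := hne
      exact ⟨x, hf hx, hf hx, hx, by simp⟩
  rw [dK_def, h, csSup_singleton]

end Aux

lemma isOpen_tauCC_gen {X Y : Type*} [TopologicalSpace X] [MetricSpace Y]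
    {K : Set X} {V : Set Y} (hK : IsCompact K) (hV : IsOpen V) :
    IsOpen[tauCC X Y] {f : Cod X Y | K ⊆ f.dom ∧ f.image K ⊆ V} := by
  letI : TopologicalSpace (Cod X Y) := tauCC X Y
  show IsOpen _
  rw [isOpen_iff_forall_mem_open]
  rintro g ⟨hgdom, hgim⟩
  rcases K.eq_empty_or_nonempty with rfl | hne
  · refine ⟨Set.univ, ?_, isOpen_univ, trivial⟩
    rintro h -
    exact ⟨by simp, by simp [Cod.image]⟩
  · have himco : IsCompact (g.image K) := by
      have hpre : IsCompact ((↑) ⁻¹' K : Set g.dom) := by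
        refine (Topology.IsInducing.subtypeVal.isCompact_preimage_iff ?_).2 hK
        rw [Subtype.range_coe]; exact hgdom
      exact hpre.image g.continuous_toFun
    obtain ⟨ε, hε, hth⟩ := himco.exists_thickening_subset_open hV hgim
    refine ⟨cball g K ε, ?_, ?_, ?_⟩
    · rintro h ⟨hdom, hd⟩
      refine ⟨hdom, ?_⟩
      rintro y ⟨x, hxK, rfl⟩
      apply hth
      rw [Metric.mem_thickening_iff]
      refine ⟨g.toFun ⟨x.1, hgdom hxK⟩, ⟨⟨x.1, hgdom hxK⟩, hxK, rfl⟩, ?_⟩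
      have h1 : dist (g.toFun ⟨x.1, hgdom hxK⟩) (h.toFun ⟨x.1, hdom hxK⟩) ≤ dK g h K :=
        dist_le_dK hK hgdom hdom hxK
      rw [dist_comm]
      exact lt_of_le_of_lt h1 hd
    · exact TopologicalSpace.isOpen_generateFrom_of_mem (Set.mem_insert_of_mem _ ⟨g, K, ε, hne, hK, hgdom, hε, rfl⟩)
    · exact ⟨hgdom, by rw [dK_self hne hgdom]; exact hε⟩

lemma isOpen_codCO_cball {X Y : Type*} [TopologicalSpace X] [LocallyCompactSpace X]
    [MetricSpace Y] {f : Cod X Y} {K : Set X} {ε : ℝ} (hne : K.Nonempty) (hK : IsCompact K)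
    (hKf : K ⊆ f.dom) (hε : 0 < ε) :
    IsOpen[codCO X Y] (cball f K ε) := by
  letI : TopologicalSpace (Cod X Y) := codCO X Y
  show IsOpen _
  rw [isOpen_iff_forall_mem_open]
  rintro g ⟨hgdom, hδ⟩
  set δ := dK f g K with hδdef
  set η := (ε - δ) / 4 with hηdef
  have hη : 0 < η := by rw [hηdef]; linarith
  have H : ∀ x : K, ∃ (L U : Set X), IsCompact L ∧ (x : X) ∈ interior L ∧ L ⊆ U ∧
      U ⊆ g.dom ∧ ∀ z (hz : z ∈ g.dom), z ∈ U →
        dist (g.toFun ⟨z, hz⟩) (g.toFun ⟨x.1, hgdom x.2⟩) < η := by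
    rintro ⟨x0, hx0K⟩
    have hx0 : x0 ∈ g.dom := hgdom hx0K
    have hT : IsOpen (g.toFun ⁻¹' Metric.ball (g.toFun ⟨x0, hx0⟩) η) :=
      g.continuous_toFun.isOpen_preimage _ Metric.isOpen_ball
    obtain ⟨W, hW, hWT⟩ := isOpen_induced_iff.mp hT
    have hUo : IsOpen (W ∩ g.dom) := hW.inter g.isOpen_dom
    have hx0U : x0 ∈ W ∩ g.dom := by
      refine ⟨?_, hx0⟩
      have : (⟨x0, hx0⟩ : g.dom) ∈ (↑) ⁻¹' W := by
        rw [hWT]; simp [Metric.mem_ball, hη]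
      exact this
    obtain ⟨L, hL, hxint, hLU⟩ := exists_compact_subset hUo hx0U
    refine ⟨L, W ∩ g.dom, hL, hxint, hLU, Set.inter_subset_right, ?_⟩
    intro z hz hzU
    have : (⟨z, hz⟩ : g.dom) ∈ (↑) ⁻¹' W := hzU.1
    rw [hWT] at this
    exact this
  choose L U hLc hxint hLU hUdom hUdist using H
  have hcover : K ⊆ ⋃ x : K, interior (L x) := fun z hz =>
    Set.mem_iUnion.2 ⟨⟨z, hz⟩, hxint _⟩
  obtain ⟨t, ht⟩ := hK.elim_finite_subcover _ (fun x => isOpen_interior) hcover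
  refine ⟨⋂ i ∈ t, {h : Cod X Y | L i ⊆ h.dom ∧
      h.image (L i) ⊆ Metric.ball (g.toFun ⟨i.1, hgdom i.2⟩) (2 * η)}, ?_, ?_, ?_⟩
  · -- contained in cball f K ε
    rintro h hh
    simp only [Set.mem_iInter] at hh
    have hKh : K ⊆ h.dom := by
      intro z hz
      obtain ⟨i, hit, hzi⟩ := Set.mem_iUnion₂.1 (ht hz)
      exact (hh i hit).1 (interior_subset hzi)
    refine ⟨hKh, ?_⟩
    have hbound : dK f h K ≤ δ + 3 * η := by
      refine dK_le hne hKf hKh ?_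
      intro x hx
      obtain ⟨i, hit, hzi⟩ := Set.mem_iUnion₂.1 (ht hx)
      have hxL : x ∈ L i := interior_subset hzi
      have h1 : dist (f.toFun ⟨x, hKf hx⟩) (g.toFun ⟨x, hgdom hx⟩) ≤ δ :=
        dist_le_dK hK hKf hgdom hx
      have h2 : dist (g.toFun ⟨x, hgdom hx⟩) (g.toFun ⟨i.1, hgdom i.2⟩) < η :=
        hUdist i x (hgdom hx) (hLU i hxL)
      have h3 : h.toFun ⟨x, (hh i hit).1 hxL⟩ ∈ Metric.ball (g.toFun ⟨i.1, hgdom i.2⟩) (2 * η) :=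
        (hh i hit).2 ⟨⟨x, (hh i hit).1 hxL⟩, hxL, rfl⟩
      rw [Metric.mem_ball] at h3
      calc dist (f.toFun ⟨x, hKf hx⟩) (h.toFun ⟨x, hKh hx⟩)
          ≤ dist (f.toFun ⟨x, hKf hx⟩) (g.toFun ⟨x, hgdom hx⟩) +
            dist (g.toFun ⟨x, hgdom hx⟩) (h.toFun ⟨x, hKh hx⟩) := dist_triangle _ _ _
        _ ≤ dist (f.toFun ⟨x, hKf hx⟩) (g.toFun ⟨x, hgdom hx⟩) +
            (dist (g.toFun ⟨x, hgdom hx⟩) (g.toFun ⟨i.1, hgdom i.2⟩) +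
             dist (g.toFun ⟨i.1, hgdom i.2⟩) (h.toFun ⟨x, hKh hx⟩)) := by
            gcongr; exact dist_triangle _ _ _
        _ ≤ δ + 3 * η := by
            have h3' : dist (g.toFun ⟨i.1, hgdom i.2⟩) (h.toFun ⟨x, hKh hx⟩) < 2 * η := by
              rw [dist_comm]; exact h3
            linarith
    calc dK f h K ≤ δ + 3 * η := hbound
      _ < ε := by rw [hηdef]; linarith
  · -- open
    refine isOpen_biInter_finset fun i _ => ?_
    exact TopologicalSpace.isOpen_generateFrom_of_mem
      ⟨L i, Metric.ball (g.toFun ⟨i.1, hgdom i.2⟩) (2 * η), hLc i, Metric.isOpen_ball, rfl⟩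
  · -- g belongs
    refine Set.mem_iInter₂.2 fun i _ => ⟨fun z hz => hUdom i (hLU i hz), ?_⟩
    rintro y ⟨z, hzL, rfl⟩
    rw [Metric.mem_ball]
    have := hUdist i z.1 z.2 (hLU i hzL)
    calc dist (g.toFun z) (g.toFun ⟨i.1, hgdom i.2⟩) < η := this
      _ < 2 * η := by linarith

/-- If `X` is locally compact Hausdorff second countable and `Y` is a metric space, then the
compact-open topology and the topology of compact convergence coincide on `C_od(X,Y)`. -/
theorem stmt7 (X Y : Type*) [TopologicalSpace X] [LocallyCompactSpace X] [T2Space X]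
    [SecondCountableTopology X] [MetricSpace Y] :
    codCO X Y = tauCC X Y := by
  apply le_antisymm
  · rw [tauCC]
    apply le_generateFrom
    rintro s (rfl | ⟨f, K, eps, hne, hK, hKf, heps, rfl⟩)
    · exact (codCO X Y).isOpen_univ
    · exact isOpen_codCO_cball hne hK hKf heps
  · rw [codCO]
    apply le_generateFrom
    rintro s ⟨K, V, hK, hV, rfl⟩
    exact isOpen_tauCC_gen hK hV
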